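/- For every natural number m ≥ 1 and every real p, ∫_{-π/2}^{π/2} (cos x)^{2m} exp(-p x) dx = (2m)! · 2 sinh(pπ/2) / [ p(p²+2²)(p²+4²)···(p²+(2m)²) ], provided p ≠ 0. -/

import Mathlib

open Real

private lemma contIntegrable (k : ℕ) (p a b : ℝ) :
    IntervalIntegrable (fun x => Real.cos x ^ k * Real.exp (-p * x)) MeasureTheory.volume a b :=
  (Continuous.mul (Real.continuous_cos.pow k)
    (Real.continuous_exp.comp (continuous_const.mul continuous_id))).intervalIntegrable a b

private lemma key_rec (m : ℕ) (p : ℝ) :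
    ((2*(m:ℝ)+2)^2 + p^2) * ∫ x in (-(π/2))..(π/2), Real.cos x ^ (2*m+2) * Real.exp (-p * x)
      = (2*(m:ℝ)+2) * (2*(m:ℝ)+1) *
        ∫ x in (-(π/2))..(π/2), Real.cos x ^ (2*m) * Real.exp (-p * x) := by
  set c : ℝ := 2*(m:ℝ)+2 with hc
  set H : ℝ → ℝ := fun x =>
    c * (Real.exp (-p*x) * (Real.cos x ^ (2*m+1) * Real.sin x))
      - p * (Real.exp (-p*x) * Real.cos x ^ (2*m+2)) with hH
  have hderiv : ∀ x ∈ Set.uIcc (-(π/2)) (π/2), HasDerivAt H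
      ((c^2+p^2) * (Real.cos x ^ (2*m+2) * Real.exp (-p*x))
        - (c*(2*(m:ℝ)+1)) * (Real.cos x ^ (2*m) * Real.exp (-p*x))) x := by
    intro x _
    have he : HasDerivAt (fun x => Real.exp (-p*x)) (Real.exp (-p*x) * (-p)) x := by
      simpa using (HasDerivAt.exp ((hasDerivAt_id x).const_mul (-p)))
    have hc1 : HasDerivAt (fun x => Real.cos x ^ (2*m+1))
        ((2*(m:ℝ)+1) * Real.cos x ^ (2*m) * (-Real.sin x)) x := by
      have := (Real.hasDerivAt_cos x).fun_pow (2*m+1)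
      simpa [Nat.add_sub_cancel] using this
    have hc2 : HasDerivAt (fun x => Real.cos x ^ (2*m+2))
        ((2*(m:ℝ)+2) * Real.cos x ^ (2*m+1) * (-Real.sin x)) x := by
      have := (Real.hasDerivAt_cos x).fun_pow (2*m+2)
      simpa [Nat.add_sub_cancel] using this
    have h1 : HasDerivAt (fun x => Real.exp (-p*x) * (Real.cos x ^ (2*m+1) * Real.sin x))
        (Real.exp (-p*x) * (-p) * (Real.cos x ^ (2*m+1) * Real.sin x)
          + Real.exp (-p*x) * (((2*(m:ℝ)+1) * Real.cos x ^ (2*m) * (-Real.sin x)) * Real.sin x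
            + Real.cos x ^ (2*m+1) * Real.cos x)) x :=
      he.mul (hc1.mul (Real.hasDerivAt_sin x))
    have h2 : HasDerivAt (fun x => Real.exp (-p*x) * Real.cos x ^ (2*m+2))
        (Real.exp (-p*x) * (-p) * Real.cos x ^ (2*m+2)
          + Real.exp (-p*x) * ((2*(m:ℝ)+2) * Real.cos x ^ (2*m+1) * (-Real.sin x))) x :=
      he.mul hc2
    have := (h1.const_mul c).sub (h2.const_mul p)
    refine this.congr_deriv ?_
    have hpy : Real.sin x ^ 2 + Real.cos x ^ 2 = 1 := Real.sin_sq_add_cos_sq x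
    have hcc : Real.cos x ^ (2*m+2) = Real.cos x ^ (2*m) * Real.cos x ^ 2 := by ring
    have hcc1 : Real.cos x ^ (2*m+1) = Real.cos x ^ (2*m) * Real.cos x := by ring
    rw [hcc, hcc1]
    linear_combination (-(c*(2*(m:ℝ)+1) * Real.exp (-p*x) * Real.cos x ^ (2*m))) * hpy
  have hint := intervalIntegral.integral_eq_sub_of_hasDerivAt hderiv
    (((contIntegrable (2*m+2) p _ _).const_mul _).sub ((contIntegrable (2*m) p _ _).const_mul _))
  have hH0 : H (π/2) - H (-(π/2)) = 0 := by
    simp [hH, Real.cos_pi_div_two, zero_pow, Nat.succ_ne_zero]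
  rw [hH0] at hint
  rw [intervalIntegral.integral_sub ((contIntegrable (2*m+2) p _ _).const_mul _)
    ((contIntegrable (2*m) p _ _).const_mul _),
    intervalIntegral.integral_const_mul, intervalIntegral.integral_const_mul] at hint
  linarith [hint]

private lemma base_case (p : ℝ) (hp : p ≠ 0) :
    ∫ x in (-(π/2))..(π/2), Real.exp (-p * x) = 2 * Real.sinh (p * π / 2) / p := by
  have hderiv : ∀ x ∈ Set.uIcc (-(π/2)) (π/2),
      HasDerivAt (fun x => Real.exp (-p*x) / (-p)) (Real.exp (-p*x)) x := by
    intro x _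
    have he : HasDerivAt (fun x => Real.exp (-p*x)) (Real.exp (-p*x) * (-p)) x := by
      simpa using (HasDerivAt.exp ((hasDerivAt_id x).const_mul (-p)))
    have h' := he.div_const (-p)
    refine h'.congr_deriv ?_
    exact mul_div_cancel_right₀ _ (neg_ne_zero.mpr hp)
  have hint := intervalIntegral.integral_eq_sub_of_hasDerivAt hderiv
    ((Real.continuous_exp.comp (continuous_const.mul continuous_id)).intervalIntegrable _ _)
  rw [hint]
  have h1 : -p * (π/2) = -(p*π/2) := by ring
  have h2 : -p * (-(π/2)) = p*π/2 := by ring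
  rw [h1, h2, Real.sinh_eq]
  set A := Real.exp (p*π/2) with hA
  set B := Real.exp (-(p*π/2)) with hB
  field_simp
  ring

private lemma main_all (m : ℕ) (p : ℝ) (hp : p ≠ 0) :
    ∫ x in (-(π/2))..(π/2), (Real.cos x) ^ (2*m) * Real.exp (-p * x) =
    (Nat.factorial (2*m) : ℝ) * 2 * Real.sinh (p * π / 2) /
      (p * ∏ k ∈ Finset.range m, (p^2 + ((2*(k+1) : ℕ) : ℝ)^2)) := by
  induction m with
  | zero =>
      simp only [Nat.mul_zero, pow_zero, one_mul, Finset.range_zero, Finset.prod_empty,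
        Nat.factorial_zero, Nat.cast_one, mul_one]
      exact base_case p hp
  | succ n ih =>
      have hrec := key_rec n p
      have h2n : 2*(n+1) = 2*n+2 := by ring
      rw [h2n]
      have hprod : ∏ k ∈ Finset.range (n+1), (p^2 + ((2*(k+1) : ℕ) : ℝ)^2)
          = (∏ k ∈ Finset.range n, (p^2 + ((2*(k+1) : ℕ) : ℝ)^2)) * (p^2 + (2*(n:ℝ)+2)^2) := by
        rw [Finset.prod_range_succ]
        congr 1
        push_cast
        ring
      have hfac : (Nat.factorial (2*n+2) : ℝ)
          = (2*(n:ℝ)+2) * (2*(n:ℝ)+1) * (Nat.factorial (2*n) : ℝ) := by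
        have : 2*n+2 = (2*n+1)+1 := by ring
        rw [this, Nat.factorial_succ, Nat.factorial_succ]
        push_cast
        ring
      rw [ih] at hrec
      have hQ : (2*(n:ℝ)+2)^2 + p^2 ≠ 0 := by positivity
      have hPne : (∏ k ∈ Finset.range n, (p^2 + ((2*(k+1) : ℕ) : ℝ)^2)) ≠ 0 := by
        apply Finset.prod_ne_zero_iff.mpr
        intro k _
        positivity
      rw [hprod, hfac]
      field_simp at hrec ⊢
      linarith [hrec]

theorem cos_pow_even_exp_integral (m : ℕ) (hm : 1 ≤ m) (p : ℝ) (hp : p ≠ 0) :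
    ∫ x in (-(π/2))..(π/2), (Real.cos x) ^ (2*m) * Real.exp (-p * x) =
    (Nat.factorial (2*m) : ℝ) * 2 * Real.sinh (p * π / 2) /
      (p * ∏ k ∈ Finset.range m, (p^2 + ((2*(k+1) : ℕ) : ℝ)^2)) := by
  exact main_all m p hp
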